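/- Let X ∈ ℝ^{n×p} have rank r ≤ p with nonzero singular values d₁,…,d_r > 0 and nonzero columns x₁,…,x_p with d̄_j = ‖x_j‖₂ > 0. Then there exist mixing parameters α₁, α₂ ∈ (0,1) with the following properties: (i) whenever penalties λ₁,…,λ_p ≥ 0 and μ ≥ 0 satisfy df(λ_j) = α₁ for all j ≤ p and df(μ) = 1 − α₁, then for every y ∈ ℝⁿ, min_{j ≤ p} RSS(λ_j) ≤ RSS(μ); and (ii) whenever penalties λ₁,…,λ_p ≥ 0 and μ ≥ 0 satisfy df(λ_j) = α₂ for all j ≤ p and df(μ) = 1 − α₂, then for every y ∈ ℝⁿ, RSS(μ) ≤ min_{j ≤ p} RSS(λ_j). -/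

import Mathlib

open Matrix Finset

/-- RSS of the ridge (group) base-learner with design matrix `X` and penalty `μ`:
`β̂_μ = (XᵀX + μI)⁻¹Xᵀy`, `RSS(μ) = (y − Xβ̂_μ)ᵀ(y − Xβ̂_μ)`. -/
noncomputable def rssGroup {n p : ℕ} (X : Matrix (Fin n) (Fin p) ℝ) (mu : ℝ)
    (y : Fin n → ℝ) : ℝ :=
  (y - X *ᵥ (((Xᵀ * X + mu • 1)⁻¹ * Xᵀ) *ᵥ y)) ⬝ᵥ (y - X *ᵥ (((Xᵀ * X + mu • 1)⁻¹ * Xᵀ) *ᵥ y))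

/-- RSS of an individual ridge base-learner with column `x` and penalty `λ`:
`β̂_λ = (xᵀx + λ)⁻¹xᵀy`, `RSS(λ) = (y − xβ̂_λ)ᵀ(y − xβ̂_λ)`. -/
noncomputable def rssInd {n : ℕ} (x : Fin n → ℝ) (lam : ℝ) (y : Fin n → ℝ) : ℝ :=
  (y - ((x ⬝ᵥ x + lam)⁻¹ * (x ⬝ᵥ y)) • x) ⬝ᵥ (y - ((x ⬝ᵥ x + lam)⁻¹ * (x ⬝ᵥ y)) • x)

/-- Degrees of freedom of an individual base-learner whose column has squared norm
`dsq = d̄²`: `df(λ) = 2d̄²/(d̄²+λ) − d̄⁴/(d̄²+λ)²`. -/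
noncomputable def dfInd (dsq lam : ℝ) : ℝ :=
  2 * dsq / (dsq + lam) - dsq ^ 2 / (dsq + lam) ^ 2

/-- Degrees of freedom of the group base-learner with singular values `d`:
`df(μ) = ∑ⱼ (2dⱼ²/(dⱼ²+μ) − dⱼ⁴/(dⱼ²+μ)²)`. -/
noncomputable def dfGroup {p : ℕ} (d : Fin p → ℝ) (mu : ℝ) : ℝ :=
  ∑ j : Fin p, (2 * (d j) ^ 2 / ((d j) ^ 2 + mu) - (d j) ^ 4 / ((d j) ^ 2 + mu) ^ 2)

/-- **Selection intervals of the sparse group boosting (existence part).**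
For a design matrix `X = U D Vᵀ` of rank `r` with nonzero columns, there exist mixing
parameters `α₁, α₂ ∈ (0,1)` such that: (i) whenever `df(λⱼ) = α₁` for all `j` and
`df(μ) = 1 − α₁`, an individual base-learner always wins (`min_j RSS(λⱼ) ≤ RSS(μ)`), and
(ii) whenever `df(λⱼ) = α₂` for all `j` and `df(μ) = 1 − α₂`, the group base-learner always
wins (`RSS(μ) ≤ min_j RSS(λⱼ)`). -/
lemma dot_self_pos {n : ℕ} {x : Fin n → ℝ} (hx : x ≠ 0) : 0 < x ⬝ᵥ x := by
  have h0 : 0 ≤ x ⬝ᵥ x := Finset.sum_nonneg fun i _ => mul_self_nonneg _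
  rcases h0.eq_or_lt with h | h
  · exact absurd (dotProduct_self_eq_zero.mp h.symm) hx
  · exact h

lemma rssInd_eq {n : ℕ} (x : Fin n → ℝ) (lam : ℝ) (y : Fin n → ℝ)
    (hx : 0 < x ⬝ᵥ x) (hl : 0 ≤ lam) :
    rssInd x lam y = y ⬝ᵥ y - dfInd (x ⬝ᵥ x) lam * (x ⬝ᵥ y) ^ 2 / (x ⬝ᵥ x) := by
  have h1 : x ⬝ᵥ x + lam ≠ 0 := by positivity
  have h2 : x ⬝ᵥ x ≠ 0 := ne_of_gt hx
  simp only [rssInd, dfInd, dotProduct_sub, sub_dotProduct, dotProduct_smul,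
    smul_dotProduct, smul_eq_mul, dotProduct_comm x y]
  field_simp
  ring

section
variable {n p : ℕ} (X U : Matrix (Fin n) (Fin p) ℝ) (V : Matrix (Fin p) (Fin p) ℝ)
  (d : Fin p → ℝ)

lemma Xt_eq (hX : X = U * Matrix.diagonal d * Vᵀ) :
    Xᵀ = V * Matrix.diagonal d * Uᵀ := by
  subst hX
  rw [transpose_mul, transpose_mul, diagonal_transpose, transpose_transpose, Matrix.mul_assoc]

lemma XtX_eq (hU : Uᵀ * U = 1) (hX : X = U * Matrix.diagonal d * Vᵀ) :
    Xᵀ * X = V * Matrix.diagonal (fun k => d k ^ 2) * Vᵀ := by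
  rw [Xt_eq X U V d hX, hX]
  calc V * Matrix.diagonal d * Uᵀ * (U * Matrix.diagonal d * Vᵀ)
      = V * Matrix.diagonal d * (Uᵀ * U) * Matrix.diagonal d * Vᵀ := by
        simp only [Matrix.mul_assoc]
    _ = V * (Matrix.diagonal d * Matrix.diagonal d) * Vᵀ := by
        rw [hU]; simp only [Matrix.mul_one, Matrix.mul_assoc]
    _ = V * Matrix.diagonal (fun k => d k ^ 2) * Vᵀ := by
        rw [diagonal_mul_diagonal]; congr 1; ext k; ring

lemma A_inv (hU : Uᵀ * U = 1) (hV : Vᵀ * V = 1) (hX : X = U * Matrix.diagonal d * Vᵀ)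
    {mu : ℝ} (hmu : 0 < mu) :
    (Xᵀ * X + mu • 1)⁻¹ = V * Matrix.diagonal (fun k => (d k ^ 2 + mu)⁻¹) * Vᵀ := by
  have hq : ∀ k, d k ^ 2 + mu ≠ 0 := fun k => by positivity
  have hVVt : V * Vᵀ = 1 := mul_eq_one_comm.mp hV
  have hA : Xᵀ * X + mu • 1 = V * Matrix.diagonal (fun k => d k ^ 2 + mu) * Vᵀ := by
    rw [XtX_eq X U V d hU hX, smul_one_eq_diagonal]
    have h0 : (Matrix.diagonal fun _ : Fin p => mu)
        = V * Matrix.diagonal (fun _ : Fin p => mu) * Vᵀ := by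
      rw [← smul_one_eq_diagonal, Matrix.mul_smul, Matrix.mul_one, Matrix.smul_mul, hVVt]
    rw [h0, ← Matrix.add_mul, ← Matrix.mul_add, diagonal_add]
  apply Matrix.inv_eq_right_inv
  rw [hA]
  calc V * Matrix.diagonal (fun k => d k ^ 2 + mu) * Vᵀ *
        (V * Matrix.diagonal (fun k => (d k ^ 2 + mu)⁻¹) * Vᵀ)
      = V * Matrix.diagonal (fun k => d k ^ 2 + mu) * (Vᵀ * V) *
        Matrix.diagonal (fun k => (d k ^ 2 + mu)⁻¹) * Vᵀ := by simp only [Matrix.mul_assoc]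
    _ = V * (Matrix.diagonal (fun k => d k ^ 2 + mu) *
        Matrix.diagonal (fun k => (d k ^ 2 + mu)⁻¹)) * Vᵀ := by
        rw [hV]; simp only [Matrix.mul_one, Matrix.mul_assoc]
    _ = 1 := by
        rw [diagonal_mul_diagonal]
        have h1 : (fun k => (d k ^ 2 + mu) * (d k ^ 2 + mu)⁻¹) = fun _ : Fin p => (1:ℝ) :=
          funext fun k => mul_inv_cancel₀ (hq k)
        rw [h1, diagonal_one, Matrix.mul_one, hVVt]

lemma rssGroup_eq (hU : Uᵀ * U = 1) (hV : Vᵀ * V = 1) (hX : X = U * Matrix.diagonal d * Vᵀ)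
    {mu : ℝ} (hmu : 0 < mu) (y : Fin n → ℝ) :
    rssGroup X mu y = y ⬝ᵥ y -
      ∑ k, (2 * d k ^ 2 / (d k ^ 2 + mu) - d k ^ 4 / (d k ^ 2 + mu) ^ 2)
        * ((Uᵀ *ᵥ y) k) ^ 2 := by
  have hq : ∀ k, d k ^ 2 + mu ≠ 0 := fun k => by positivity
  set s : Fin p → ℝ := fun k => d k ^ 2 * (d k ^ 2 + mu)⁻¹ with hs
  have hH : X * ((Xᵀ * X + mu • 1)⁻¹ * Xᵀ) = U * Matrix.diagonal s * Uᵀ := by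
    rw [A_inv X U V d hU hV hX hmu, Xt_eq X U V d hX, hX]
    calc U * Matrix.diagonal d * Vᵀ *
          (V * Matrix.diagonal (fun k => (d k ^ 2 + mu)⁻¹) * Vᵀ *
            (V * Matrix.diagonal d * Uᵀ))
        = U * Matrix.diagonal d * (Vᵀ * V) * Matrix.diagonal (fun k => (d k ^ 2 + mu)⁻¹) *
            (Vᵀ * V) * Matrix.diagonal d * Uᵀ := by simp only [Matrix.mul_assoc]
      _ = U * (Matrix.diagonal d * Matrix.diagonal (fun k => (d k ^ 2 + mu)⁻¹) *
            Matrix.diagonal d) * Uᵀ := by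
          rw [hV]; simp only [Matrix.mul_one, Matrix.mul_assoc]
      _ = U * Matrix.diagonal s * Uᵀ := by
          rw [diagonal_mul_diagonal, diagonal_mul_diagonal]
          congr 1; congr 1; refine congrArg Matrix.diagonal (funext fun k => ?_); simp only [hs]; ring
  set w : Fin p → ℝ := Uᵀ *ᵥ y with hw
  have hXb : X *ᵥ (((Xᵀ * X + mu • 1)⁻¹ * Xᵀ) *ᵥ y)
      = U *ᵥ (fun k => s k * w k) := by
    rw [Matrix.mulVec_mulVec, hH, ← Matrix.mulVec_mulVec, ← Matrix.mulVec_mulVec]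
    have h2 : Matrix.diagonal s *ᵥ (Uᵀ *ᵥ y) = fun k => s k * w k := by
      ext k; rw [Matrix.mulVec_diagonal]
    rw [h2]
  have key : ∀ z : Fin p → ℝ, y ⬝ᵥ (U *ᵥ z) = w ⬝ᵥ z := by
    intro z
    rw [dotProduct_mulVec, ← Matrix.mulVec_transpose]
  have key2 : ∀ z z' : Fin p → ℝ, (U *ᵥ z) ⬝ᵥ (U *ᵥ z') = z ⬝ᵥ z' := by
    intro z z'
    rw [dotProduct_mulVec, ← Matrix.mulVec_transpose, Matrix.mulVec_mulVec, hU, Matrix.one_mulVec]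
  rw [rssGroup, hXb, dotProduct_sub, sub_dotProduct, sub_dotProduct,
    key, key2, dotProduct_comm (U *ᵥ fun k => s k * w k) y, key]
  have hsum : ∑ k, (2 * d k ^ 2 / (d k ^ 2 + mu) - d k ^ 4 / (d k ^ 2 + mu) ^ 2) * (w k) ^ 2
      = 2 * (w ⬝ᵥ fun k => s k * w k) - ((fun k => s k * w k) ⬝ᵥ fun k => s k * w k) := by
    rw [dotProduct, dotProduct, Finset.mul_sum, ← Finset.sum_sub_distrib]
    refine Finset.sum_congr rfl fun k _ => ?_
    have := hq k
    simp only [hs]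
    field_simp [hs]
  rw [hsum]; ring

lemma t_apply (y : Fin n → ℝ) (j : Fin p) :
    (fun i => X i j) ⬝ᵥ y = (Xᵀ *ᵥ y) j := rfl

lemma t_eq (hX : X = U * Matrix.diagonal d * Vᵀ) (y : Fin n → ℝ) (j : Fin p) :
    (Xᵀ *ᵥ y) j = ∑ k, V j k * (d k * ((Uᵀ *ᵥ y) k)) := by
  rw [Xt_eq X U V d hX, ← Matrix.mulVec_mulVec, ← Matrix.mulVec_mulVec]
  have h2 : Matrix.diagonal d *ᵥ (Uᵀ *ᵥ y) = fun k => d k * ((Uᵀ *ᵥ y) k) := by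
    ext k; rw [Matrix.mulVec_diagonal]
  rw [h2]
  rfl

lemma dw_eq (hV : Vᵀ * V = 1) (hX : X = U * Matrix.diagonal d * Vᵀ) (y : Fin n → ℝ)
    (k : Fin p) :
    d k * ((Uᵀ *ᵥ y) k) = ∑ j, V j k * ((Xᵀ *ᵥ y) j) := by
  have h1 : Vᵀ *ᵥ (Xᵀ *ᵥ y) = fun k => d k * ((Uᵀ *ᵥ y) k) := by
    rw [Xt_eq X U V d hX, Matrix.mulVec_mulVec, ← Matrix.mul_assoc, ← Matrix.mul_assoc, hV,
      Matrix.one_mul, ← Matrix.mulVec_mulVec]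
    ext k; rw [Matrix.mulVec_diagonal]
  have h2 := congrFun h1 k
  rw [← h2, Matrix.mulVec]
  rfl

end
set_option maxHeartbeats 1600000 in
theorem sparse_group_boosting_selection_intervals {n p : ℕ} (hp : 0 < p)
    (r : ℕ) (hr : r ≤ p)
    (X U : Matrix (Fin n) (Fin p) ℝ) (V : Matrix (Fin p) (Fin p) ℝ)
    (d : Fin p → ℝ)
    (hU : Uᵀ * U = 1) (hV : Vᵀ * V = 1)
    (hdpos : ∀ j : Fin p, (j : ℕ) < r → 0 < d j)
    (hdzero : ∀ j : Fin p, r ≤ (j : ℕ) → d j = 0)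
    (hX : X = U * Matrix.diagonal d * Vᵀ)
    (hrank : X.rank = r)
    (hcol : ∀ j : Fin p, (fun i => X i j) ≠ 0) :
    ∃ α₁ ∈ Set.Ioo (0 : ℝ) 1, ∃ α₂ ∈ Set.Ioo (0 : ℝ) 1,
      (∀ (lam : Fin p → ℝ) (mu : ℝ), (∀ j, 0 ≤ lam j) → 0 ≤ mu →
        (∀ j : Fin p, dfInd ((fun i => X i j) ⬝ᵥ fun i => X i j) (lam j) = α₁) →
        dfGroup d mu = 1 - α₁ →
        ∀ y : Fin n → ℝ, ∃ j : Fin p,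
          rssInd (fun i => X i j) (lam j) y ≤ rssGroup X mu y) ∧
      (∀ (lam : Fin p → ℝ) (mu : ℝ), (∀ j, 0 ≤ lam j) → 0 ≤ mu →
        (∀ j : Fin p, dfInd ((fun i => X i j) ⬝ᵥ fun i => X i j) (lam j) = α₂) →
        dfGroup d mu = 1 - α₂ →
        ∀ (y : Fin n → ℝ) (j : Fin p),
          rssGroup X mu y ≤ rssInd (fun i => X i j) (lam j) y) := by
  classical
  -- r ≥ 1
  have hr1 : 1 ≤ r := by
    by_contra h
    push_neg at h
    have hr0 : r = 0 := by omega
    have hd : d = 0 := funext fun j => hdzero j (by omega)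
    have hX0 : X = 0 := by
      have hdiag : Matrix.diagonal d = 0 := by
        ext i j
        rcases eq_or_ne i j with rfl | hne
        · simp [hd]
        · simp [Matrix.diagonal_apply_ne _ hne]
      rw [hX, hdiag, Matrix.mul_zero, Matrix.zero_mul]
    exact hcol ⟨0, hp⟩ (by funext i; rw [hX0]; rfl)
  set k0 : Fin p := ⟨0, hp⟩ with hk0def
  have hk0r : (k0 : ℕ) < r := hr1
  have hd0 : 0 < d k0 := hdpos k0 hk0r
  set dsq : Fin p → ℝ := fun j => (fun i => X i j) ⬝ᵥ (fun i => X i j) with hdsqdef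
  have hdsq : ∀ j, 0 < dsq j := fun j => dot_self_pos (hcol j)
  -- dsq in terms of V and d
  have hdsq_eq : ∀ j, dsq j = ∑ k, (V j k) ^ 2 * d k ^ 2 := by
    intro j
    have h1 : dsq j = (Xᵀ * X) j j := by
      rw [Matrix.mul_apply]
      rfl
    rw [h1, XtX_eq X U V d hU hX, Matrix.mul_apply]
    refine Finset.sum_congr rfl fun k _ => ?_
    rw [Matrix.mul_diagonal, Matrix.transpose_apply]
    ring
  have hVcol : ∀ k, ∑ j, (V j k) ^ 2 = 1 := by
    intro k
    have h1 := congrFun (congrFun hV k) k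
    rw [Matrix.mul_apply] at h1
    rw [Matrix.one_apply_eq] at h1
    rw [← h1]
    refine Finset.sum_congr rfl fun j _ => ?_
    rw [Matrix.transpose_apply]
    ring
  set Td : ℝ := ∑ k, d k ^ 2 with hTddef
  have hTd_pos : 0 < Td :=
    Finset.sum_pos' (fun k _ => sq_nonneg _) ⟨k0, Finset.mem_univ _, by positivity⟩
  have hTsum : ∑ j, dsq j = Td := by
    rw [hTddef]
    calc ∑ j, dsq j = ∑ j, ∑ k, (V j k) ^ 2 * d k ^ 2 :=
          Finset.sum_congr rfl fun j _ => hdsq_eq j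
      _ = ∑ k, ∑ j, (V j k) ^ 2 * d k ^ 2 := Finset.sum_comm
      _ = ∑ k, d k ^ 2 := by
          refine Finset.sum_congr rfl fun k _ => ?_
          rw [← Finset.sum_mul, hVcol k, one_mul]
  set K : ℝ := ∑ k : Fin p, if (k : ℕ) < r then Td / d k ^ 2 else 0 with hKdef
  have hK0 : 0 ≤ K := Finset.sum_nonneg fun k _ => by
    split
    · positivity
    · exact le_rfl
  have hKk : ∀ k : Fin p, (k : ℕ) < r → Td / d k ^ 2 ≤ K := by
    intro k hk
    have hnn : ∀ i ∈ Finset.univ, (0:ℝ) ≤ if (i : Fin p).1 < r then Td / d i ^ 2 else 0 := by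
      intro i _
      split
      · positivity
      · exact le_rfl
    have h1 := Finset.single_le_sum hnn (Finset.mem_univ k)
    simp only [if_pos hk] at h1
    exact h1
  set S : Finset (Fin p) := Finset.univ.filter (fun k : Fin p => (k : ℕ) < r) with hSdef
  have hSne : S.Nonempty := ⟨k0, by simp [hSdef, hk0r]⟩
  have hSmem : ∀ k : Fin p, k ∈ S ↔ (k : ℕ) < r := by
    intro k; simp [hSdef]
  set dm : ℝ := S.inf' hSne (fun k => d k ^ 2) with hdmdef
  have hdm_pos : 0 < dm := by
    rw [hdmdef, Finset.lt_inf'_iff]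
    intro k hk
    have := hdpos k ((hSmem k).mp hk)
    positivity
  have hdm_le : ∀ k ∈ S, dm ≤ d k ^ 2 := fun k hk => Finset.inf'_le _ hk
  have hdmT : dm ≤ Td := by
    refine le_trans (hdm_le k0 ((hSmem k0).mpr hk0r)) ?_
    exact Finset.single_le_sum (fun k _ => sq_nonneg (d k)) (Finset.mem_univ k0)
  clear_value K dm Td
  -- positivity of mu whenever the group df equation holds with α > 0
  have hmu_pos : ∀ (mu α : ℝ), 0 < α → dfGroup d mu = 1 - α → 0 ≤ mu → 0 < mu := by
    intro mu α hα hdfG hmu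
    rcases hmu.eq_or_lt with h | h
    · exfalso
      have hterm : ∀ k : Fin p,
          (0:ℝ) ≤ 2 * (d k) ^ 2 / ((d k) ^ 2 + mu) - (d k) ^ 4 / ((d k) ^ 2 + mu) ^ 2 := by
        intro k
        rcases eq_or_ne (d k) 0 with h0 | h0
        · simp [h0]
        · have hne : (d k) ^ 2 ≠ 0 := pow_ne_zero 2 h0
          rw [← h, add_zero]
          have : 2 * (d k) ^ 2 / ((d k) ^ 2) - (d k) ^ 4 / ((d k) ^ 2) ^ 2 = 1 := by
            field_simp
            ring
          rw [this]
          norm_num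
      have hk0term : 2 * (d k0) ^ 2 / ((d k0) ^ 2 + mu) - (d k0) ^ 4 / ((d k0) ^ 2 + mu) ^ 2
          = 1 := by
        have hne : (d k0) ^ 2 ≠ 0 := pow_ne_zero 2 (ne_of_gt hd0)
        rw [← h, add_zero]
        field_simp
        ring
      have h1 : (1:ℝ) ≤ dfGroup d mu := by
        rw [dfGroup, ← hk0term]
        exact Finset.single_le_sum (fun k _ => hterm k) (Finset.mem_univ k0)
      rw [hdfG] at h1
      linarith
    · exact h
  refine ⟨(K + 1) / (K + 2),
    ⟨div_pos (by linarith) (by linarith), by rw [div_lt_one (by linarith)]; linarith⟩,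
    dm / (dm + 4 * Td),
    ⟨div_pos hdm_pos (by linarith), by rw [div_lt_one (by linarith)]; linarith⟩, ?_, ?_⟩
  · -- branch (i): individual wins
    intro lam mu hlam hmu hdfi hdfg y
    set α₁ : ℝ := (K + 1) / (K + 2) with hα₁def
    have hα₁pos : 0 < α₁ := div_pos (by linarith) (by linarith)
    have hmu' : 0 < mu := hmu_pos mu α₁ hα₁pos hdfg hmu
    set w : Fin p → ℝ := Uᵀ *ᵥ y with hwdef
    set t : Fin p → ℝ := Xᵀ *ᵥ y with htdef
    set c : Fin p → ℝ :=
      fun k => 2 * (d k) ^ 2 / ((d k) ^ 2 + mu) - (d k) ^ 4 / ((d k) ^ 2 + mu) ^ 2 with hcdef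
    have hq : ∀ k, (0:ℝ) < (d k) ^ 2 + mu := fun k => by nlinarith [sq_nonneg (d k)]
    have hc0 : ∀ k, 0 ≤ c k := by
      intro k
      have he : c k = (d k ^ 2 * (d k ^ 2 + 2 * mu)) / ((d k) ^ 2 + mu) ^ 2 := by
        rw [hcdef]
        field_simp
        ring
      rw [he]
      apply div_nonneg
      · nlinarith [sq_nonneg (d k)]
      · positivity
    have hczero : ∀ k : Fin p, r ≤ (k : ℕ) → c k = 0 := by
      intro k hk
      rw [hcdef]
      simp [hdzero k hk]
    have hc_sum : ∑ k, c k = 1 - α₁ := hdfg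
    have hRG : rssGroup X mu y = y ⬝ᵥ y - ∑ k, c k * (w k) ^ 2 :=
      rssGroup_eq X U V d hU hV hX hmu' y
    have hRI : ∀ j, rssInd (fun i => X i j) (lam j) y = y ⬝ᵥ y - α₁ * (t j) ^ 2 / dsq j := by
      intro j
      rw [rssInd_eq _ _ _ (hdsq j) (hlam j), hdfi j, t_apply]
    obtain ⟨j, -, hj⟩ := Finset.exists_max_image Finset.univ
      (fun j => (t j) ^ 2 / dsq j) ⟨k0, Finset.mem_univ _⟩
    have hgj0 : 0 ≤ (t j) ^ 2 / dsq j := div_nonneg (sq_nonneg _) (hdsq j).le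
    refine ⟨j, ?_⟩
    rw [hRI j, hRG]
    have hwk : ∀ k : Fin p, (k : ℕ) < r → (w k) ^ 2 ≤ Td / d k ^ 2 * ((t j) ^ 2 / dsq j) := by
      intro k hk
      have hdk : 0 < d k := hdpos k hk
      have h1 : (d k * w k) ^ 2 ≤ ∑ j', (t j') ^ 2 := by
        rw [dw_eq X U V d hV hX y k]
        calc (∑ j', V j' k * t j') ^ 2
            ≤ (∑ j', (V j' k) ^ 2) * ∑ j', (t j') ^ 2 :=
              Finset.sum_mul_sq_le_sq_mul_sq _ _ _
          _ = ∑ j', (t j') ^ 2 := by rw [hVcol k, one_mul]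
      have h2 : ∑ j', (t j') ^ 2 ≤ Td * ((t j) ^ 2 / dsq j) := by
        have h3 : ∀ j', (t j') ^ 2 = dsq j' * ((t j') ^ 2 / dsq j') := by
          intro j'
          rw [mul_div_assoc']
          rw [mul_comm, mul_div_assoc, div_self (ne_of_gt (hdsq j')), mul_one]
        calc ∑ j', (t j') ^ 2 = ∑ j', dsq j' * ((t j') ^ 2 / dsq j') :=
              Finset.sum_congr rfl fun j' _ => h3 j'
          _ ≤ ∑ j', dsq j' * ((t j) ^ 2 / dsq j) :=
              Finset.sum_le_sum fun j' _ =>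
                mul_le_mul_of_nonneg_left (hj j' (Finset.mem_univ _)) (hdsq j').le
          _ = Td * ((t j) ^ 2 / dsq j) := by rw [← Finset.sum_mul, hTsum]
      have h4 : d k ^ 2 * (w k) ^ 2 ≤ Td * ((t j) ^ 2 / dsq j) := by
        calc d k ^ 2 * (w k) ^ 2 = (d k * w k) ^ 2 := by ring
          _ ≤ ∑ j', (t j') ^ 2 := h1
          _ ≤ Td * ((t j) ^ 2 / dsq j) := h2
      rw [div_mul_eq_mul_div, le_div_iff₀ (pow_pos hdk 2)]
      linarith [h4]
    have hsum1 : ∑ k, c k * (w k) ^ 2 ≤ ∑ k, c k * (K * ((t j) ^ 2 / dsq j)) := by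
      refine Finset.sum_le_sum fun k _ => ?_
      rcases lt_or_ge (k : ℕ) r with hk | hk
      · refine mul_le_mul_of_nonneg_left ?_ (hc0 k)
        calc (w k) ^ 2 ≤ Td / d k ^ 2 * ((t j) ^ 2 / dsq j) := hwk k hk
          _ ≤ K * ((t j) ^ 2 / dsq j) :=
            mul_le_mul_of_nonneg_right (hKk k hk) hgj0
      · rw [hczero k hk, zero_mul, zero_mul]
    have hsum2 : ∑ k, c k * (K * ((t j) ^ 2 / dsq j)) = (1 - α₁) * (K * ((t j) ^ 2 / dsq j)) := by
      rw [← Finset.sum_mul, hc_sum]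
    have hkey : (1 - α₁) * K ≤ α₁ := by
      rw [hα₁def]
      have hK2 : (0:ℝ) < K + 2 := by linarith
      have he : 1 - (K + 1) / (K + 2) = 1 / (K + 2) := by
        field_simp
        norm_num
      rw [he, div_mul_eq_mul_div, one_mul, div_le_div_iff₀ hK2 hK2]
      nlinarith
    have hfin : ∑ k, c k * (w k) ^ 2 ≤ α₁ * ((t j) ^ 2 / dsq j) := by
      calc ∑ k, c k * (w k) ^ 2 ≤ (1 - α₁) * (K * ((t j) ^ 2 / dsq j)) := by
            rw [← hsum2]; exact hsum1
        _ = ((1 - α₁) * K) * ((t j) ^ 2 / dsq j) := by ring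
        _ ≤ α₁ * ((t j) ^ 2 / dsq j) := mul_le_mul_of_nonneg_right hkey hgj0
    rw [mul_div_assoc]
    linarith [hfin]
  · -- branch (ii): group wins
    intro lam mu hlam hmu hdfi hdfg y j
    set α₂ : ℝ := dm / (dm + 4 * Td) with hα₂def
    have hα₂pos : 0 < α₂ := div_pos hdm_pos (by linarith)
    have hmu' : 0 < mu := hmu_pos mu α₂ hα₂pos hdfg hmu
    set w : Fin p → ℝ := Uᵀ *ᵥ y with hwdef
    set t : Fin p → ℝ := Xᵀ *ᵥ y with htdef
    set c : Fin p → ℝ :=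
      fun k => 2 * (d k) ^ 2 / ((d k) ^ 2 + mu) - (d k) ^ 4 / ((d k) ^ 2 + mu) ^ 2 with hcdef
    have hq : ∀ k, (0:ℝ) < (d k) ^ 2 + mu := fun k => by nlinarith [sq_nonneg (d k)]
    have hc0 : ∀ k, 0 ≤ c k := by
      intro k
      have he : c k = (d k ^ 2 * (d k ^ 2 + 2 * mu)) / ((d k) ^ 2 + mu) ^ 2 := by
        rw [hcdef]
        field_simp
        ring
      rw [he]
      apply div_nonneg
      · nlinarith [sq_nonneg (d k)]
      · positivity
    have hc_sum : ∑ k, c k = 1 - α₂ := hdfg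
    have hRG : rssGroup X mu y = y ⬝ᵥ y - ∑ k, c k * (w k) ^ 2 :=
      rssGroup_eq X U V d hU hV hX hmu' y
    have hRI : rssInd (fun i => X i j) (lam j) y = y ⬝ᵥ y - α₂ * (t j) ^ 2 / dsq j := by
      rw [rssInd_eq _ _ _ (hdsq j) (hlam j), hdfi j, t_apply]
    -- mu is bounded: mu ≤ 4 Td
    have hα₂half : α₂ ≤ 1 / 2 := by
      rw [hα₂def, div_le_div_iff₀ (by linarith) (by norm_num)]
      nlinarith
    have hck_le : ∀ k, c k ≤ 2 * d k ^ 2 / mu := by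
      intro k
      have h1 : c k ≤ 2 * (d k) ^ 2 / ((d k) ^ 2 + mu) := by
        rw [hcdef]
        have : (0:ℝ) ≤ (d k) ^ 4 / ((d k) ^ 2 + mu) ^ 2 := by positivity
        linarith
      refine le_trans h1 ?_
      apply div_le_div_of_nonneg_left (by positivity) hmu'
      linarith [sq_nonneg (d k)]
    have hmuT : mu ≤ 4 * Td := by
      have h1 : 1 - α₂ ≤ 2 * Td / mu := by
        rw [← hc_sum]
        calc ∑ k, c k ≤ ∑ k, 2 * d k ^ 2 / mu := Finset.sum_le_sum fun k _ => hck_le k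
          _ = 2 * Td / mu := by rw [← Finset.sum_div, ← Finset.mul_sum, ← hTddef]
      have h2 : (1 - α₂) * mu ≤ 2 * Td := by
        rw [← le_div_iff₀ hmu']
        exact h1
      nlinarith
    -- each relevant c k is at least α₂
    have hck_ge : ∀ k ∈ S, α₂ ≤ c k := by
      intro k hk
      have hdk : 0 < d k := hdpos k ((hSmem k).mp hk)
      have hdk2 : 0 < d k ^ 2 := pow_pos hdk 2
      have h1 : d k ^ 2 / (d k ^ 2 + mu) ≤ c k := by
        have he : c k - d k ^ 2 / (d k ^ 2 + mu) = (d k ^ 2 * mu) / ((d k) ^ 2 + mu) ^ 2 := by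
          rw [hcdef]
          field_simp
          ring
        have : (0:ℝ) ≤ (d k ^ 2 * mu) / ((d k) ^ 2 + mu) ^ 2 :=
          div_nonneg (mul_nonneg (sq_nonneg _) hmu'.le) (sq_nonneg _)
        linarith
      have h2 : α₂ ≤ d k ^ 2 / (d k ^ 2 + mu) := by
        rw [hα₂def, div_le_div_iff₀ (by linarith) (hq k)]
        have h3 := hdm_le k hk
        nlinarith [mul_le_mul h3 hmuT hmu'.le hdk2.le]
      exact le_trans h2 h1
    -- Cauchy-Schwarz
    have htj : t j = ∑ k ∈ S, (V j k * d k) * w k := by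
      have h0 : t j = ∑ k, V j k * (d k * w k) := t_eq X U V d hX y j
      rw [h0]
      rw [← Finset.sum_subset (Finset.subset_univ S)
        (fun k _ hk => by
          have : r ≤ (k : ℕ) := not_lt.mp (fun hlt => hk ((hSmem k).mpr hlt))
          simp [hdzero k this])]
      exact Finset.sum_congr rfl fun k _ => by ring
    have hCS : (t j) ^ 2 ≤ dsq j * ∑ k ∈ S, (w k) ^ 2 := by
      rw [htj]
      calc (∑ k ∈ S, (V j k * d k) * w k) ^ 2
          ≤ (∑ k ∈ S, (V j k * d k) ^ 2) * ∑ k ∈ S, (w k) ^ 2 :=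
            Finset.sum_mul_sq_le_sq_mul_sq _ _ _
        _ ≤ dsq j * ∑ k ∈ S, (w k) ^ 2 := by
            refine mul_le_mul_of_nonneg_right ?_ (Finset.sum_nonneg fun _ _ => sq_nonneg _)
            rw [hdsq_eq j]
            have he : ∀ k : Fin p, (V j k * d k) ^ 2 = (V j k) ^ 2 * d k ^ 2 :=
              fun k => by ring
            calc ∑ k ∈ S, (V j k * d k) ^ 2 = ∑ k ∈ S, (V j k) ^ 2 * d k ^ 2 :=
                  Finset.sum_congr rfl fun k _ => he k
              _ ≤ ∑ k, (V j k) ^ 2 * d k ^ 2 :=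
                  Finset.sum_le_sum_of_subset_of_nonneg (Finset.subset_univ S)
                    fun k _ _ => by positivity
    have hlow : α₂ * ∑ k ∈ S, (w k) ^ 2 ≤ ∑ k, c k * (w k) ^ 2 := by
      calc α₂ * ∑ k ∈ S, (w k) ^ 2 = ∑ k ∈ S, α₂ * (w k) ^ 2 := Finset.mul_sum _ _ _
        _ ≤ ∑ k ∈ S, c k * (w k) ^ 2 :=
            Finset.sum_le_sum fun k hk =>
              mul_le_mul_of_nonneg_right (hck_ge k hk) (sq_nonneg _)
        _ ≤ ∑ k, c k * (w k) ^ 2 :=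
            Finset.sum_le_sum_of_subset_of_nonneg (Finset.subset_univ S)
              fun k _ _ => mul_nonneg (hc0 k) (sq_nonneg _)
    have hup : α₂ * (t j) ^ 2 / dsq j ≤ α₂ * ∑ k ∈ S, (w k) ^ 2 := by
      rw [mul_div_assoc]
      refine mul_le_mul_of_nonneg_left ?_ hα₂pos.le
      rw [div_le_iff₀ (hdsq j)]
      calc (t j) ^ 2 ≤ dsq j * ∑ k ∈ S, (w k) ^ 2 := hCS
        _ = (∑ k ∈ S, (w k) ^ 2) * dsq j := by ring
    rw [hRG, hRI]
    linarith [le_trans hup hlow]
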